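/- Let P be an absolutely continuous probability measure on ℝ with distribution function F. Let m_1 < ⋯ < m_{r−1} and consider the interval clustering 𝒞 = {(m_0, m_1), …, (m_{r−1}, m_r)} of P, with m_0 = −∞ and m_r = +∞. Then there exists δ > 0 such that for any points m̂_1 < ⋯ < m̂_{r−1} with |m̂_j − m_j| ≤ δ for all j, the interval clustering 𝒟 = {(m̂_0, m̂_1), …, (m̂_{r−1}, m̂_r)} (with m̂_0 = −∞, m̂_r = +∞) satisfies d_P(𝒞,𝒟) = Σ_{j=1}^{r−1} |F(m̂_j) − F(m_j)|. -/

import Mathlib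

open MeasureTheory Set
open scoped ENNReal

/-- The interval clustering of `ℝ` determined by cut points `m 0 < ⋯ < m (r-2)`:
cluster `i` is the open interval `(m (i-1), m i)`, with `m (-1) = -∞` and `m (r-1) = +∞`. -/
def intervalClusters (r : ℕ) (m : Fin (r - 1) → ℝ) (i : Fin r) : Set ℝ :=
  {x : ℝ | (∀ j : Fin (r - 1), (j : ℕ) < (i : ℕ) → m j < x) ∧
           (∀ j : Fin (r - 1), (i : ℕ) ≤ (j : ℕ) → x < m j)}

/-- The distance in `P`-measure between two clusterings with the same number `r` of clusters:
`d_P(𝒞,𝒟) = (1/2) min_{σ ∈ 𝒫_r} Σᵢ P(Cᵢ △ D_{σ(i)})`. -/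
noncomputable def clusterDistP {X : Type*} [MeasurableSpace X] {r : ℕ}
    (P : Measure X) (C D : Fin r → Set X) : ℝ≥0∞ :=
  (⨅ σ : Equiv.Perm (Fin r), ∑ i, P (symmDiff (C i) (D (σ i)))) / 2

/-- The distribution function of a probability measure `P` on `ℝ`. -/
noncomputable def distFun (P : Measure ℝ) (x : ℝ) : ℝ :=
  (P (Set.Iic x)).toReal

noncomputable section ClusterAuxSection

/-- Open interval of reals with extended-real endpoints. -/
def eIoo (a b : EReal) : Set ℝ := {x : ℝ | a < (x:EReal) ∧ (x:EReal) < b}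

lemma measurableSet_eIoo (a b : EReal) : MeasurableSet (eIoo a b) :=
  (measurableSet_Ioo (a := a) (b := b)).preimage continuous_coe_real_ereal.measurable

lemma eIoo_coe_coe (u v : ℝ) : eIoo u v = Set.Ioo u v := by
  ext x; simp [eIoo]

/-- measure of the gap between two extended reals -/
def dP (P : Measure ℝ) (x y : EReal) : ℝ≥0∞ := P (eIoo (min x y) (max x y))

lemma dP_ne_top (P : Measure ℝ) [IsFiniteMeasure P] (x y : EReal) : dP P x y ≠ ⊤ :=
  measure_ne_top P _

lemma dP_self (P : Measure ℝ) (x : EReal) : dP P x x = 0 := by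
  have : eIoo x x = ∅ := by
    ext t; simp only [eIoo, mem_setOf_eq, mem_empty_iff_false, iff_false, not_and]
    intro h1 h2; exact absurd (h1.trans h2) (lt_irrefl x)
  simp [dP, this]

lemma null_coe_eq (P : Measure ℝ) (hac : P ≪ MeasureTheory.volume) (b : EReal) :
    P {x : ℝ | (x:EReal) = b} = 0 := by
  induction b using EReal.rec with
  | bot =>
    have : {x : ℝ | (x:EReal) = (⊥:EReal)} = ∅ := by ext x; simp
    simp [this]
  | coe u =>
    have : {x : ℝ | (x:EReal) = ((u:ℝ):EReal)} = {u} := by ext x; simp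
    rw [this]; exact hac Real.volume_singleton
  | top =>
    have : {x : ℝ | (x:EReal) = (⊤:EReal)} = ∅ := by ext x; simp
    simp [this]

lemma meas_eIoc (P : Measure ℝ) (hac : P ≪ MeasureTheory.volume) (a b : EReal) :
    P {x : ℝ | a < (x:EReal) ∧ (x:EReal) ≤ b} = P (eIoo a b) := by
  refine le_antisymm ?_ (measure_mono fun x hx => ⟨hx.1, hx.2.le⟩)
  calc P {x : ℝ | a < (x:EReal) ∧ (x:EReal) ≤ b}
      ≤ P (eIoo a b ∪ {x : ℝ | (x:EReal) = b}) := by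
        refine measure_mono fun x hx => ?_
        rcases hx.2.lt_or_eq with h | h
        · exact Or.inl ⟨hx.1, h⟩
        · exact Or.inr h
    _ ≤ P (eIoo a b) + P {x : ℝ | (x:EReal) = b} := measure_union_le _ _
    _ = P (eIoo a b) := by rw [null_coe_eq P hac, add_zero]

lemma meas_eIco (P : Measure ℝ) (hac : P ≪ MeasureTheory.volume) (a b : EReal) :
    P {x : ℝ | a ≤ (x:EReal) ∧ (x:EReal) < b} = P (eIoo a b) := by
  refine le_antisymm ?_ (measure_mono fun x hx => ⟨hx.1.le, hx.2⟩)
  calc P {x : ℝ | a ≤ (x:EReal) ∧ (x:EReal) < b}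
      ≤ P (eIoo a b ∪ {x : ℝ | (x:EReal) = a}) := by
        refine measure_mono fun x hx => ?_
        rcases hx.1.lt_or_eq with h | h
        · exact Or.inl ⟨h, hx.2⟩
        · exact Or.inr h.symm
    _ ≤ P (eIoo a b) + P {x : ℝ | (x:EReal) = a} := measure_union_le _ _
    _ = P (eIoo a b) := by rw [null_coe_eq P hac, add_zero]

lemma measurableSet_eIco' (a b : EReal) :
    MeasurableSet {x : ℝ | a ≤ (x:EReal) ∧ (x:EReal) < b} :=
  (measurableSet_Ico (a := a) (b := b)).preimage continuous_coe_real_ereal.measurable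

lemma meas_add_meas (P : Measure ℝ) (x y : EReal) :
    P (eIoo x y) + P (eIoo y x) = dP P x y := by
  rcases le_total x y with h | h
  · have he : eIoo y x = ∅ := by
      ext t; simp only [eIoo, mem_setOf_eq, mem_empty_iff_false, iff_false, not_and, not_lt]
      intro ht; exact h.trans ht.le
    simp [dP, he, min_eq_left h, max_eq_right h]
  · have he : eIoo x y = ∅ := by
      ext t; simp only [eIoo, mem_setOf_eq, mem_empty_iff_false, iff_false, not_and, not_lt]
      intro ht; exact h.trans ht.le
    simp [dP, he, min_eq_right h, max_eq_left h]

lemma meas_symmDiff_eIoo (P : Measure ℝ) (hac : P ≪ MeasureTheory.volume)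
    (a b a' b' : EReal) (hab : a < b) (hab' : a' < b') (h1 : a < b') (h2 : a' < b) :
    P (symmDiff (eIoo a b) (eIoo a' b')) = dP P a a' + dP P b b' := by
  have hdiff : ∀ (u v u' v' : EReal), u < v' → u' < v →
      eIoo u v \ eIoo u' v' =
        {x : ℝ | u < (x:EReal) ∧ (x:EReal) ≤ u'} ∪ {x : ℝ | v' ≤ (x:EReal) ∧ (x:EReal) < v} := by
    intro u v u' v' huv' hu'v
    ext x
    simp only [eIoo, mem_diff, mem_setOf_eq, mem_union, not_and, not_lt]
    constructor
    · rintro ⟨⟨hux, hxv⟩, h⟩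
      by_cases hxu' : (x:EReal) ≤ u'
      · exact Or.inl ⟨hux, hxu'⟩
      · exact Or.inr ⟨h (not_le.mp hxu'), hxv⟩
    · rintro (⟨hux, hxu'⟩ | ⟨hv'x, hxv⟩)
      · exact ⟨⟨hux, lt_of_le_of_lt hxu' hu'v⟩,
          fun hu'x => absurd (lt_of_lt_of_le hu'x hxu') (lt_irrefl _)⟩
      · exact ⟨⟨lt_of_lt_of_le huv' hv'x, hxv⟩, fun _ => hv'x⟩
  have hAB := hdiff a b a' b' h1 h2
  have hBA := hdiff a' b' a b h2 h1
  have hd1 : Disjoint (eIoo a b \ eIoo a' b') (eIoo a' b' \ eIoo a b) := disjoint_sdiff_sdiff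
  have hm : MeasurableSet (eIoo a' b' \ eIoo a b) :=
    (measurableSet_eIoo a' b').diff (measurableSet_eIoo a b)
  have hpieces : ∀ (u v u' v' : EReal), u' < v' →
      P ({x : ℝ | u < (x:EReal) ∧ (x:EReal) ≤ u'} ∪ {x : ℝ | v' ≤ (x:EReal) ∧ (x:EReal) < v}) =
        P (eIoo u u') + P (eIoo v' v) := by
    intro u v u' v' hu'v'
    rw [measure_union ?_ (measurableSet_eIco' v' v), meas_eIoc P hac, meas_eIco P hac]
    rintro s hs1 hs2 x hx
    have h1x := hs1 hx
    have h2x := hs2 hx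
    exact absurd ((h1x.2.trans_lt hu'v').trans_le h2x.1) (lt_irrefl _)
  rw [Set.symmDiff_def, measure_union hd1 hm, hAB, hBA,
    hpieces a b a' b' hab', hpieces a' b' a b hab]
  rw [show P (eIoo a a') + P (eIoo b' b) + (P (eIoo a' a) + P (eIoo b b')) =
      (P (eIoo a a') + P (eIoo a' a)) + (P (eIoo b b') + P (eIoo b' b)) by ring,
    meas_add_meas, meas_add_meas]

def cutA (n : ℕ) (m : Fin n → ℝ) (k : ℕ) : EReal :=
  if h : 0 < k ∧ k ≤ n then ((m ⟨k-1, by omega⟩ : ℝ) : EReal)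
  else if k = 0 then ⊥ else ⊤

lemma cutA_zero (n : ℕ) (m : Fin n → ℝ) : cutA n m 0 = ⊥ := by simp [cutA]

lemma cutA_top (n : ℕ) (m : Fin n → ℝ) (k : ℕ) (h : n < k) : cutA n m k = ⊤ := by
  simp only [cutA]; rw [dif_neg (by omega), if_neg (by omega)]

lemma cutA_mid (n : ℕ) (m : Fin n → ℝ) (k : ℕ) (h1 : 0 < k) (h2 : k ≤ n) :
    cutA n m k = ((m ⟨k-1, by omega⟩ : ℝ) : EReal) := by
  simp only [cutA]; rw [dif_pos ⟨h1, h2⟩]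

lemma cutA_coe (n : ℕ) (m : Fin n → ℝ) (j : Fin n) :
    cutA n m ((j:ℕ)+1) = ((m j : ℝ) : EReal) := by
  rw [cutA_mid n m _ (by omega) (by omega)]
  exact congrArg _ (congrArg m (Fin.ext (by simp)))

lemma cutA_lt (n : ℕ) (m : Fin n → ℝ) (hm : StrictMono m) {k l : ℕ}
    (hk : k ≤ n) (hkl : k < l) : cutA n m k < cutA n m l := by
  rcases Nat.eq_zero_or_pos k with hk0 | hk0
  · subst hk0
    rw [cutA_zero]
    rcases le_or_gt l n with hl | hl
    · rw [cutA_mid n m l hkl hl]; exact EReal.bot_lt_coe _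
    · rw [cutA_top n m l hl]; exact bot_lt_top
  · rw [cutA_mid n m k hk0 hk]
    rcases le_or_gt l n with hl | hl
    · rw [cutA_mid n m l (by omega) hl]
      exact EReal.coe_lt_coe_iff.mpr (hm (by simp [Fin.lt_def]; omega))
    · rw [cutA_top n m l hl]; exact EReal.coe_lt_top _

lemma intervalClusters_eq (n : ℕ) (m : Fin n → ℝ) (hm : StrictMono m) (i : Fin (n+1)) :
    intervalClusters (n+1) m i = eIoo (cutA n m (i:ℕ)) (cutA n m ((i:ℕ)+1)) := by
  ext x
  simp only [intervalClusters, eIoo, mem_setOf_eq]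
  constructor
  · rintro ⟨hL, hR⟩
    constructor
    · rcases Nat.eq_zero_or_pos (i:ℕ) with hi | hi
      · rw [hi, cutA_zero]; exact EReal.bot_lt_coe x
      · have h2 : (i:ℕ) ≤ n := Nat.lt_succ_iff.mp i.isLt
        rw [cutA_mid n m (i:ℕ) hi h2]
        exact EReal.coe_lt_coe_iff.mpr (hL ⟨(i:ℕ)-1, by omega⟩ (show (i:ℕ)-1 < (i:ℕ) by omega))
    · rcases eq_or_lt_of_le (Nat.lt_succ_iff.mp i.isLt) with hi | hi
      · rw [cutA_top n m _ (by omega)]; exact EReal.coe_lt_top x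
      · rw [cutA_mid n m ((i:ℕ)+1) (by omega) (by omega)]
        exact EReal.coe_lt_coe_iff.mpr (hR ⟨(i:ℕ), hi⟩ (le_refl _))
  · rintro ⟨h1, h2⟩
    constructor
    · intro j hj
      have h0 : 0 < (i:ℕ) := by omega
      rw [cutA_mid n m (i:ℕ) h0 (Nat.lt_succ_iff.mp i.isLt)] at h1
      have hle : m j ≤ m ⟨(i:ℕ)-1, by omega⟩ := hm.monotone (by simp [Fin.le_def]; omega)
      exact lt_of_le_of_lt hle (EReal.coe_lt_coe_iff.mp h1)
    · intro j hj
      have hin : (i:ℕ) < n := lt_of_le_of_lt hj j.isLt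
      rw [cutA_mid n m ((i:ℕ)+1) (by omega) (by omega)] at h2
      have hle : m ⟨(i:ℕ)+1-1, by omega⟩ ≤ m j := hm.monotone (by simp [Fin.le_def]; omega)
      exact lt_of_lt_of_le (EReal.coe_lt_coe_iff.mp h2) hle

lemma meas_Ioo_toReal (P : Measure ℝ) [IsProbabilityMeasure P]
    (hac : P ≪ MeasureTheory.volume) {u v : ℝ} (h : u ≤ v) :
    (P (Set.Ioo u v)).toReal = distFun P v - distFun P u := by
  have hIoc : P (Set.Ioc u v) = P (Set.Ioo u v) := by
    refine le_antisymm ?_ (measure_mono Set.Ioo_subset_Ioc_self)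
    calc P (Set.Ioc u v) ≤ P (Set.Ioo u v ∪ {v}) := by
          refine measure_mono fun x hx => ?_
          rcases hx.2.lt_or_eq with h' | h'
          · exact Or.inl ⟨hx.1, h'⟩
          · exact Or.inr h'
      _ ≤ P (Set.Ioo u v) + P {v} := measure_union_le _ _
      _ = P (Set.Ioo u v) := by rw [hac Real.volume_singleton, add_zero]
  have hsplit : P (Set.Iic u) + P (Set.Ioc u v) = P (Set.Iic v) := by
    rw [← measure_union (Set.Iic_disjoint_Ioc le_rfl) measurableSet_Ioc,
      Set.Iic_union_Ioc_eq_Iic h]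
  rw [hIoc] at hsplit
  have := congrArg ENNReal.toReal hsplit
  rw [ENNReal.toReal_add (measure_ne_top P _) (measure_ne_top P _)] at this
  simp only [distFun]
  linarith [this]

lemma dP_toReal (P : Measure ℝ) [IsProbabilityMeasure P]
    (hac : P ≪ MeasureTheory.volume) (u v : ℝ) :
    (dP P (u:EReal) (v:EReal)).toReal = |distFun P v - distFun P u| := by
  have hmono : ∀ {a b : ℝ}, a ≤ b → distFun P a ≤ distFun P b := by
    intro a b hab
    exact ENNReal.toReal_mono (measure_ne_top P _) (measure_mono (Set.Iic_subset_Iic.mpr hab))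
  rcases le_total u v with h | h
  · rw [dP, min_eq_left (EReal.coe_le_coe_iff.mpr h), max_eq_right (EReal.coe_le_coe_iff.mpr h),
      eIoo_coe_coe, meas_Ioo_toReal P hac h, abs_of_nonneg (by linarith [hmono h])]
  · rw [dP, min_eq_right (EReal.coe_le_coe_iff.mpr h), max_eq_left (EReal.coe_le_coe_iff.mpr h),
      eIoo_coe_coe, meas_Ioo_toReal P hac h, abs_of_nonpos (by linarith [hmono h])]
    ring

end ClusterAuxSection

theorem clusterDistP_eq_sum_abs_distFun
    (P : Measure ℝ) [IsProbabilityMeasure P]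
    (hac : P ≪ MeasureTheory.volume)
    (r : ℕ) (hr : 1 ≤ r)
    (m : Fin (r - 1) → ℝ) (hm_mono : StrictMono m)
    (hC : ∀ i, 0 < P (intervalClusters r m i)) :
    ∃ δ > 0, ∀ mhat : Fin (r - 1) → ℝ, StrictMono mhat →
      (∀ j, |mhat j - m j| ≤ δ) →
      (clusterDistP P (intervalClusters r m) (intervalClusters r mhat)).toReal =
        ∑ j : Fin (r - 1), |distFun P (mhat j) - distFun P (m j)| := by
  obtain ⟨n, rfl⟩ : ∃ n, r = n + 1 := ⟨r - 1, (Nat.succ_pred_eq_of_pos hr).symm⟩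
  have hmm : StrictMono (m : Fin n → ℝ) := hm_mono
  -- minimum cluster mass
  obtain ⟨i₀, -, hi₀⟩ := Finset.exists_min_image Finset.univ
    (fun i => P (intervalClusters (n+1) m i)) ⟨0, Finset.mem_univ 0⟩
  set c := P (intervalClusters (n+1) m i₀) with hc_def
  have hc0 : c ≠ 0 := (hC i₀).ne'
  have hc_top : c ≠ ⊤ := measure_ne_top P _
  have hc_le : ∀ i, c ≤ P (intervalClusters (n+1) m i) := fun i => hi₀ i (Finset.mem_univ i)
  set ε : ℝ≥0∞ := c / (2*(n:ℝ≥0∞)+2) with hε_def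
  have hden0 : (2*(n:ℝ≥0∞)+2) ≠ 0 := by
    intro h; simpa using (by exact_mod_cast h : (2*(n:ℝ≥0∞)+2) = 0)
  have hden_top : (2*(n:ℝ≥0∞)+2) ≠ ⊤ := by
    refine ENNReal.add_ne_top.mpr ⟨?_, by norm_num⟩
    exact ENNReal.mul_ne_top (by norm_num) (ENNReal.natCast_ne_top n)
  have hε0 : 0 < ε := ENNReal.div_pos hc0 hden_top
  have hε_top : ε ≠ ⊤ := by
    rw [hε_def]
    exact (ENNReal.div_lt_top hc_top hden0).ne
  have hεc : (2*(n:ℝ≥0∞)+2) * ε = c := ENNReal.mul_div_cancel hden0 hden_top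
  -- choose δ
  have hball : ∀ᶠ δ in nhds (0:ℝ), ∀ j : Fin n, P (Metric.cthickening δ {m j}) < ε := by
    rw [Filter.eventually_all]
    intro j
    have htd := tendsto_measure_cthickening_of_isCompact (μ := P)
      (isCompact_singleton (x := m j))
    have hPj : P {m j} = 0 := hac Real.volume_singleton
    rw [hPj] at htd
    exact htd.eventually_lt_const hε0
  have hgap : ∀ᶠ δ in nhds (0:ℝ), ∀ j k : Fin n, (j:ℕ) < (k:ℕ) → m j + 2*δ < m k := by
    rw [Filter.eventually_all]
    intro j
    rw [Filter.eventually_all]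
    intro k
    by_cases hjk : (j:ℕ) < (k:ℕ)
    · have hlt : m j < m k := hmm hjk
      have htd : Filter.Tendsto (fun δ : ℝ => m j + 2*δ) (nhds 0) (nhds (m j)) := by
        have : Filter.Tendsto (fun δ : ℝ => m j + 2*δ) (nhds 0) (nhds (m j + 2*0)) := by
          exact (tendsto_const_nhds.add ((continuous_const.mul continuous_id).tendsto 0))
        simpa using this
      exact (htd.eventually_lt_const hlt).mono fun δ h _ => h
    · exact Filter.Eventually.of_forall fun δ h => absurd h hjk
  obtain ⟨δ, hδev, hδpos⟩ :=
    (((hball.and hgap).filter_mono (nhdsWithin_le_nhds (s := Set.Ioi (0:ℝ)))).and (self_mem_nhdsWithin (a := (0:ℝ)) (s := Set.Ioi 0))).exists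
  obtain ⟨hδball, hδgap⟩ := hδev
  have hδpos' : (0:ℝ) < δ := hδpos
  refine ⟨δ, hδpos', ?_⟩
  intro mhat hmhat_mono hmhat_close
  have hmh : StrictMono (mhat : Fin n → ℝ) := hmhat_mono
  -- basic endpoint inequalities
  have hAlt : ∀ i : Fin (n+1), cutA n m (i:ℕ) < cutA n m ((i:ℕ)+1) :=
    fun i => cutA_lt n m hmm (Nat.lt_succ_iff.mp i.isLt) (Nat.lt_succ_self _)
  have hBlt : ∀ i : Fin (n+1), cutA n mhat (i:ℕ) < cutA n mhat ((i:ℕ)+1) :=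
    fun i => cutA_lt n mhat hmh (Nat.lt_succ_iff.mp i.isLt) (Nat.lt_succ_self _)
  have hclose : ∀ j : Fin n, m j - δ ≤ mhat j ∧ mhat j ≤ m j + δ := by
    intro j
    have := abs_le.mp (hmhat_close j)
    constructor <;> linarith [this.1, this.2]
  have hcross1 : ∀ i : Fin (n+1), cutA n m (i:ℕ) < cutA n mhat ((i:ℕ)+1) := by
    intro i
    rcases Nat.eq_zero_or_pos (i:ℕ) with hi | hi
    · rw [hi, cutA_zero]
      rcases le_or_gt (0+1) n with hl | hl
      · rw [cutA_mid n mhat (0+1) (by omega) hl]; exact EReal.bot_lt_coe _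
      · rw [cutA_top n mhat (0+1) hl]; exact bot_lt_top
    · have hin : (i:ℕ) ≤ n := Nat.lt_succ_iff.mp i.isLt
      rw [cutA_mid n m (i:ℕ) hi hin]
      rcases le_or_gt ((i:ℕ)+1) n with hl | hl
      · rw [cutA_mid n mhat ((i:ℕ)+1) (by omega) hl]
        refine EReal.coe_lt_coe_iff.mpr ?_
        have hg := hδgap ⟨(i:ℕ)-1, by omega⟩ ⟨(i:ℕ)+1-1, by omega⟩ (show (i:ℕ)-1 < (i:ℕ)+1-1 by omega)
        have hcl := (hclose ⟨(i:ℕ)+1-1, by omega⟩).1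
        linarith
      · rw [cutA_top n mhat ((i:ℕ)+1) hl]; exact EReal.coe_lt_top _
  have hcross2 : ∀ i : Fin (n+1), cutA n mhat (i:ℕ) < cutA n m ((i:ℕ)+1) := by
    intro i
    rcases Nat.eq_zero_or_pos (i:ℕ) with hi | hi
    · rw [hi, cutA_zero]
      rcases le_or_gt (0+1) n with hl | hl
      · rw [cutA_mid n m (0+1) (by omega) hl]; exact EReal.bot_lt_coe _
      · rw [cutA_top n m (0+1) hl]; exact bot_lt_top
    · have hin : (i:ℕ) ≤ n := Nat.lt_succ_iff.mp i.isLt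
      rw [cutA_mid n mhat (i:ℕ) hi hin]
      rcases le_or_gt ((i:ℕ)+1) n with hl | hl
      · rw [cutA_mid n m ((i:ℕ)+1) (by omega) hl]
        refine EReal.coe_lt_coe_iff.mpr ?_
        have hg := hδgap ⟨(i:ℕ)-1, by omega⟩ ⟨(i:ℕ)+1-1, by omega⟩ (show (i:ℕ)-1 < (i:ℕ)+1-1 by omega)
        have hcl := (hclose ⟨(i:ℕ)-1, by omega⟩).2
        linarith
      · rw [cutA_top n m ((i:ℕ)+1) hl]; exact EReal.coe_lt_top _
  -- per-index symmDiff formula for the identity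
  have hid : ∀ i : Fin (n+1),
      P (symmDiff (intervalClusters (n+1) m i) (intervalClusters (n+1) mhat i)) =
        dP P (cutA n m (i:ℕ)) (cutA n mhat (i:ℕ)) +
        dP P (cutA n m ((i:ℕ)+1)) (cutA n mhat ((i:ℕ)+1)) := by
    intro i
    rw [intervalClusters_eq n m hmm i, intervalClusters_eq n mhat hmh i]
    exact meas_symmDiff_eIoo P hac _ _ _ _ (hAlt i) (hBlt i) (hcross1 i) (hcross2 i)
  set S : ℝ≥0∞ := ∑ j : Fin n, dP P ((m j : ℝ) : EReal) ((mhat j : ℝ) : EReal) with hS_def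
  have hsumid : (∑ i : Fin (n+1),
      P (symmDiff (intervalClusters (n+1) m i) (intervalClusters (n+1) mhat i))) = 2 * S := by
    rw [Finset.sum_congr rfl (fun i _ => hid i), Finset.sum_add_distrib]
    have e1 : (∑ i : Fin (n+1), dP P (cutA n m (i:ℕ)) (cutA n mhat (i:ℕ))) = S := by
      rw [Fin.sum_univ_succ]
      have h0 : dP P (cutA n m ((0 : Fin (n+1)):ℕ)) (cutA n mhat ((0 : Fin (n+1)):ℕ)) = 0 := by
        simp only [Fin.val_zero, cutA_zero]
        exact dP_self P ⊥
      rw [h0, zero_add, hS_def]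
      refine Finset.sum_congr rfl fun j _ => ?_
      rw [Fin.val_succ, cutA_coe, cutA_coe]
    have e2 : (∑ i : Fin (n+1), dP P (cutA n m ((i:ℕ)+1)) (cutA n mhat ((i:ℕ)+1))) = S := by
      rw [Fin.sum_univ_castSucc]
      have h0 : dP P (cutA n m (((Fin.last n):ℕ)+1)) (cutA n mhat (((Fin.last n):ℕ)+1)) = 0 := by
        simp only [Fin.val_last]
        rw [cutA_top n m (n+1) (by omega), cutA_top n mhat (n+1) (by omega)]
        exact dP_self P ⊤
      rw [h0, add_zero, hS_def]
      refine Finset.sum_congr rfl fun j _ => ?_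
      rw [Fin.coe_castSucc, cutA_coe, cutA_coe]
    rw [e1, e2, two_mul]
  -- each gap mass is at most ε
  have hdle : ∀ j : Fin n, dP P ((m j : ℝ) : EReal) ((mhat j : ℝ) : EReal) ≤ ε := by
    intro j
    refine le_of_lt (lt_of_le_of_lt ?_ (hδball j))
    rw [Metric.cthickening_singleton _ hδpos'.le, Real.closedBall_eq_Icc]
    have hsub : eIoo (min ((m j :ℝ):EReal) ((mhat j:ℝ):EReal))
        (max ((m j:ℝ):EReal) ((mhat j:ℝ):EReal)) ⊆ Set.Icc (m j - δ) (m j + δ) := by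
      rcases le_total (m j) (mhat j) with h | h
      · rw [min_eq_left (EReal.coe_le_coe_iff.mpr h), max_eq_right (EReal.coe_le_coe_iff.mpr h),
          eIoo_coe_coe]
        intro x hx
        exact ⟨by linarith [hx.1, hδpos'], by linarith [hx.2, (hclose j).2]⟩
      · rw [min_eq_right (EReal.coe_le_coe_iff.mpr h), max_eq_left (EReal.coe_le_coe_iff.mpr h),
          eIoo_coe_coe]
        intro x hx
        exact ⟨by linarith [hx.1, (hclose j).1], by linarith [hx.2, hδpos']⟩
    exact measure_mono hsub
  have hSle : S ≤ (n:ℝ≥0∞) * ε := by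
    rw [hS_def]
    calc (∑ j : Fin n, dP P ((m j : ℝ) : EReal) ((mhat j : ℝ) : EReal))
        ≤ Finset.univ.card • ε :=
          Finset.sum_le_card_nsmul _ _ ε (fun j _ => hdle j)
      _ = (n:ℝ≥0∞) * ε := by
          rw [Finset.card_univ, Fintype.card_fin, nsmul_eq_mul]
  -- cross intersections are small
  have hinter : ∀ i j : Fin (n+1), i ≠ j →
      P (intervalClusters (n+1) m i ∩ intervalClusters (n+1) mhat j) ≤ ε := by
    intro i j hij
    have hsub : ∃ k : Fin n, intervalClusters (n+1) m i ∩ intervalClusters (n+1) mhat j ⊆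
        Set.Icc (m k - δ) (m k + δ) := by
      rcases lt_or_gt_of_ne (fun h => hij (Fin.ext h) : (i:ℕ) ≠ (j:ℕ)) with hlt | hlt
      · -- i < j, use k = i
        have hin : (i:ℕ) < n := by have := Nat.lt_succ_iff.mp j.isLt; omega
        refine ⟨⟨(i:ℕ), hin⟩, ?_⟩
        intro x hx
        rw [intervalClusters_eq n m hmm i] at hx
        rw [intervalClusters_eq n mhat hmh j] at hx
        obtain ⟨⟨-, hxu⟩, ⟨hjl, -⟩⟩ := hx
        rw [cutA_mid n m ((i:ℕ)+1) (by omega) (by omega)] at hxu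
        rw [cutA_mid n mhat (j:ℕ) (by omega) (Nat.lt_succ_iff.mp j.isLt)] at hjl
        have hxu' : x < m ⟨(i:ℕ)+1-1, by omega⟩ := EReal.coe_lt_coe_iff.mp hxu
        have hjl' : mhat ⟨(j:ℕ)-1, by omega⟩ < x := EReal.coe_lt_coe_iff.mp hjl
        have hmono : m (⟨(i:ℕ), hin⟩ : Fin n) ≤ m ⟨(j:ℕ)-1, by omega⟩ :=
          hmm.monotone (by simp [Fin.le_def]; omega)
        have hcl := (hclose ⟨(j:ℕ)-1, by omega⟩).1
        have hieq : m ⟨(i:ℕ)+1-1, by omega⟩ = m (⟨(i:ℕ), hin⟩ : Fin n) :=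
          congrArg m (Fin.ext (by simp))
        constructor
        · linarith
        · rw [hieq] at hxu'; linarith
      · -- j < i, use k = i - 1
        have hi1 : 0 < (i:ℕ) := by omega
        have hin : (i:ℕ)-1 < n := by have := Nat.lt_succ_iff.mp i.isLt; omega
        refine ⟨⟨(i:ℕ)-1, hin⟩, ?_⟩
        intro x hx
        rw [intervalClusters_eq n m hmm i] at hx
        rw [intervalClusters_eq n mhat hmh j] at hx
        obtain ⟨⟨hxl, -⟩, ⟨-, hju⟩⟩ := hx
        rw [cutA_mid n m (i:ℕ) hi1 (Nat.lt_succ_iff.mp i.isLt)] at hxl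
        rw [cutA_mid n mhat ((j:ℕ)+1) (by omega) (by omega)] at hju
        have hxl' : m ⟨(i:ℕ)-1, by omega⟩ < x := EReal.coe_lt_coe_iff.mp hxl
        have hju' : x < mhat ⟨(j:ℕ)+1-1, by omega⟩ := EReal.coe_lt_coe_iff.mp hju
        have hmono : m ⟨(j:ℕ)+1-1, by omega⟩ ≤ m (⟨(i:ℕ)-1, hin⟩ : Fin n) :=
          hmm.monotone (by simp [Fin.le_def]; omega)
        have hcl := (hclose ⟨(j:ℕ)+1-1, by omega⟩).2
        constructor
        · linarith
        · linarith
    obtain ⟨k, hk⟩ := hsub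
    refine le_of_lt (lt_of_le_of_lt ?_ (hδball k))
    rw [Metric.cthickening_singleton _ hδpos'.le, Real.closedBall_eq_Icc]
    exact measure_mono hk
  -- the identity permutation minimizes
  have hσ_ge : ∀ σ : Equiv.Perm (Fin (n+1)),
      2 * S ≤ ∑ i : Fin (n+1),
        P (symmDiff (intervalClusters (n+1) m i) (intervalClusters (n+1) mhat (σ i))) := by
    intro σ
    by_cases hσ : ∀ i, σ i = i
    · exact le_of_eq (hsumid.symm.trans
        (Finset.sum_congr rfl fun i _ => by rw [hσ i]))
    · push_neg at hσ
      obtain ⟨i, hi⟩ := hσ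
      have h4 : P (intervalClusters (n+1) m i) ≤
          P (symmDiff (intervalClusters (n+1) m i) (intervalClusters (n+1) mhat (σ i))) + ε := by
        calc P (intervalClusters (n+1) m i)
            = P ((intervalClusters (n+1) m i \ intervalClusters (n+1) mhat (σ i)) ∪
                (intervalClusters (n+1) m i ∩ intervalClusters (n+1) mhat (σ i))) := by
              rw [Set.diff_union_inter]
          _ ≤ P (intervalClusters (n+1) m i \ intervalClusters (n+1) mhat (σ i)) +
              P (intervalClusters (n+1) m i ∩ intervalClusters (n+1) mhat (σ i)) :=
            measure_union_le _ _
          _ ≤ _ := by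
            refine add_le_add (measure_mono ?_) (hinter i (σ i) (fun h => absurd h.symm hi))
            rw [Set.symmDiff_def]
            exact Set.subset_union_left
      have h5 : P (symmDiff (intervalClusters (n+1) m i) (intervalClusters (n+1) mhat (σ i))) ≤
          ∑ i' : Fin (n+1), P (symmDiff (intervalClusters (n+1) m i')
            (intervalClusters (n+1) mhat (σ i'))) :=
        Finset.single_le_sum (f := fun i' : Fin (n+1) => P (symmDiff (intervalClusters (n+1) m i')
          (intervalClusters (n+1) mhat (σ i')))) (fun _ _ => zero_le) (Finset.mem_univ i)
      have hchain : 2 * S + ε ≤ (∑ i' : Fin (n+1), P (symmDiff (intervalClusters (n+1) m i')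
          (intervalClusters (n+1) mhat (σ i')))) + ε := by
        calc 2 * S + ε ≤ 2 * ((n:ℝ≥0∞) * ε) + ε := by
              exact add_le_add_left (mul_le_mul_right hSle 2) ε
          _ = (2*(n:ℝ≥0∞)+1) * ε := by ring
          _ ≤ (2*(n:ℝ≥0∞)+2) * ε := by
              refine mul_le_mul_left (add_le_add_right (by norm_num) _) ε
          _ = c := hεc
          _ ≤ P (intervalClusters (n+1) m i) := hc_le i
          _ ≤ _ := h4.trans (add_le_add_left h5 ε)
      exact (ENNReal.add_le_add_iff_right hε_top).mp hchain
  have hinf : (⨅ σ : Equiv.Perm (Fin (n+1)), ∑ i : Fin (n+1),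
      P (symmDiff (intervalClusters (n+1) m i) (intervalClusters (n+1) mhat (σ i)))) = 2 * S := by
    refine le_antisymm ?_ (le_iInf hσ_ge)
    refine (iInf_le _ (1 : Equiv.Perm (Fin (n+1)))).trans_eq ?_
    rw [← hsumid]
    exact Finset.sum_congr rfl fun i _ => by rw [Equiv.Perm.one_apply]
  rw [clusterDistP, hinf, mul_comm, mul_div_assoc,
    ENNReal.div_self (by norm_num) (by norm_num), mul_one, hS_def,
    ENNReal.toReal_sum (fun j _ => dP_ne_top P _ _)]
  exact Finset.sum_congr rfl fun j _ => dP_toReal P hac (m j) (mhat j)
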